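/- Let (X, ≤) be a partially ordered set and let Σ be a finite alphabet with at least two letters. Then the following are equivalent: (1) there exists an order embedding of (X, ≤) into the set Σ* of finite words ordered by the infix relation; (2) X is countable and for every x ∈ X the set {y ∈ X | y ≤ x} is finite. -/

import Mathlib

open List

namespace KuskeProof

/-- Splitting an infix occurrence across an append. -/
theorem infix_append_cases {α : Type*} {u a b : List α} (h : u <:+: a ++ b) :
    u <:+: a ∨ u <:+: b ∨
      ∃ u₁ u₂, u = u₁ ++ u₂ ∧ u₁ ≠ [] ∧ u₂ ≠ [] ∧ u₁ <:+ a ∧ u₂ <+: b := by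
  obtain ⟨s, t, hst⟩ := h
  rw [append_assoc] at hst
  rcases List.append_eq_append_iff.mp hst with ⟨k, hk1, hk2⟩ | ⟨k, hk1, hk2⟩
  · -- a = s ++ k, u ++ t = k ++ b
    rcases List.append_eq_append_iff.mp hk2 with ⟨m, hm1, hm2⟩ | ⟨m, hm1, hm2⟩
    · -- k = u ++ m, t = m ++ b
      left; exact ⟨s, m, by rw [hk1, hm1, append_assoc]⟩
    · -- u = k ++ m, b = m ++ t
      rcases eq_or_ne k [] with rfl | hk
      · right; left
        exact ⟨[], t, by simpa using hk2⟩
      rcases eq_or_ne m [] with rfl | hm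
      · left
        refine ⟨s, [], ?_⟩
        simp only [append_nil] at hm1 ⊢
        rw [hk1, ← hm1]
      · right; right
        exact ⟨k, m, hm1, hk, hm, ⟨s, hk1.symm⟩, ⟨t, hm2.symm⟩⟩
  · -- s = a ++ k, b = k ++ u ++ t
    right; left; exact ⟨k, t, by rw [hk2, append_assoc]⟩

/-- `NR k l`: `l` contains no run of `k` consecutive `true`s. -/
def NR (k : ℕ) (l : List Bool) : Prop := ¬ (replicate k true <:+: l)

theorem NR.mono_k {k k' : ℕ} {l : List Bool} (h : NR k l) (hk : k ≤ k') : NR k' l := by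
  intro hcon
  refine h (IsInfix.trans ⟨[], replicate (k' - k) true, ?_⟩ hcon)
  simp [← replicate_add]
  omega

theorem NR.of_infix {k : ℕ} {l u : List Bool} (h : NR k l) (hu : u <:+: l) : NR k u :=
  fun hcon => h (hcon.trans hu)

theorem NR_of_not_mem {k : ℕ} (hk : 1 ≤ k) {l : List Bool} (h : true ∉ l) : NR k l := by
  intro hcon
  exact h (hcon.subset (mem_replicate.mpr ⟨by omega, rfl⟩))

/-- appending across a `false` boundary preserves run bounds. -/
theorem NR.append {k : ℕ} (hk : 1 ≤ k) {a b : List Bool} (ha : NR k a) (hb : NR k b) :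
    NR k (a ++ false :: b) := by
  intro hcon
  have hall : ∀ x ∈ replicate k true, x = true := fun x hx => eq_of_mem_replicate hx
  rcases infix_append_cases hcon with h | h | ⟨u₁, u₂, hu, h1, h2, hs, hp⟩
  · exact ha h
  · rcases infix_append_cases (a := [false]) h with h' | h' | ⟨u₁, u₂, hu, h1, h2, hs, hp⟩
    · have : (true : Bool) ∈ [false] :=
        h'.subset (mem_replicate.mpr ⟨by omega, rfl⟩)
      simp at this
    · exact hb h'
    · cases u₁ with
      | nil => exact h1 rfl
      | cons x xs =>
        have hx : x = false := by
          have := hs.subset ((mem_cons_self (a := x) (l := xs)))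
          simpa using this
        have : x = true := hall x (by rw [hu]; exact mem_append_left _ (mem_cons_self))
        simp [hx] at this
  · cases u₂ with
    | nil => exact h2 rfl
    | cons x xs =>
      have hx : x = false := (cons_prefix_cons.mp hp).1
      have : x = true := hall x (by rw [hu]; exact mem_append_right _ (mem_cons_self))
      simp [hx] at this



def mark (n : ℕ) : List Bool := false :: (replicate n true ++ [false])

def glue (n : ℕ) : List (List Bool) → List Bool
  | [] => mark n
  | b :: L => mark n ++ (b ++ glue n L)

theorem mark_ne_nil (n : ℕ) : mark n ≠ [] := by simp [mark]

theorem NR_nil {k : ℕ} (hk : 1 ≤ k) : NR k ([] : List Bool) := by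
  intro h
  have := h.length_le
  simp at this
  omega

theorem NR_replicate {n : ℕ} : NR (n + 1) (replicate n true) := by
  intro h
  have := h.length_le
  simp at this

theorem NR.append' {k : ℕ} (hk : 1 ≤ k) {a b : List Bool} (ha : NR k a) (hb : NR k b)
    (hhead : ∃ b', b = false :: b') : NR k (a ++ b) := by
  obtain ⟨b', rfl⟩ := hhead
  have hb' : NR k b' := fun h => hb (h.trans ⟨[false], [], by simp⟩)
  exact NR.append hk ha hb'

theorem NR_mark (n : ℕ) : NR (n + 1) (mark n) := by
  have h1 : NR (n + 1) (replicate n true ++ [false]) := by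
    have := NR.append (k := n+1) (by omega) (a := replicate n true) (b := [])
      NR_replicate (NR_nil (by omega))
    simpa using this
  have : NR (n + 1) ([] ++ false :: (replicate n true ++ [false])) :=
    NR.append (by omega) (NR_nil (by omega)) h1
  simpa [mark] using this

theorem mark_prefix_glue (n : ℕ) (L : List (List Bool)) : mark n <+: glue n L := by
  cases L with
  | nil => exact prefix_rfl
  | cons b L => exact ⟨b ++ glue n L, rfl⟩

theorem mark_suffix_glue (n : ℕ) (L : List (List Bool)) : mark n <:+ glue n L := by
  induction L with
  | nil => exact suffix_rfl
  | cons b L ih => exact ih.trans ((suffix_append b _).trans (suffix_append (mark n) _))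

theorem glue_head (n : ℕ) (L : List (List Bool)) : ∃ g, glue n L = false :: g := by
  obtain ⟨t, ht⟩ := mark_prefix_glue n L
  exact ⟨replicate n true ++ [false] ++ t, by rw [← ht]; simp [mark]⟩

theorem infix_glue_of_mem {n : ℕ} {L : List (List Bool)} {b : List Bool} (h : b ∈ L) :
    b <:+: glue n L := by
  induction L with
  | nil => simp at h
  | cons c L ih =>
    rcases mem_cons.mp h with rfl | h
    · exact ⟨mark n, glue n L, by simp [glue]⟩
    · exact ((ih h).trans ⟨mark n ++ c, [], by simp [glue]⟩)

theorem NR_glue {n : ℕ} {L : List (List Bool)}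
    (h : ∀ b ∈ L, NR (n + 1) b ∧ ∃ b', b = false :: b') : NR (n + 1) (glue n L) := by
  induction L with
  | nil => exact NR_mark n
  | cons b L ih =>
    have hb := h b ((mem_cons_self (a := b) (l := L)))
    have hg : NR (n + 1) (glue n L) := ih (fun c hc => h c (mem_cons_of_mem _ hc))
    have hbg : NR (n + 1) (b ++ glue n L) := by
      refine NR.append' (by omega) hb.1 hg ?_
      obtain ⟨g, hgeq⟩ := glue_head n L
      exact ⟨g, hgeq⟩
    show NR (n + 1) (mark n ++ (b ++ glue n L))
    refine NR.append' (by omega) (NR_mark n) hbg ?_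
    obtain ⟨b', rfl⟩ := hb.2
    exact ⟨b' ++ glue n L, rfl⟩

def val (S : Finset ℕ) : ℕ := ∑ i ∈ S, 2 ^ i

theorem val_strictMono {R S : Finset ℕ} (h : R ⊂ S) : val R < val S := by
  obtain ⟨i, hiS, hiR⟩ := Finset.exists_of_ssubset h
  exact Finset.sum_lt_sum_of_subset h.subset hiS hiR (by positivity) (fun j _ _ => by positivity)

theorem val_injective : Function.Injective val :=
  Finset.geomSum_injective (le_refl 2)

def Nv (S : Finset ℕ) : ℕ := val S + 1

noncomputable def w (S : Finset ℕ) : List Bool :=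
  glue (Nv S) (S.ssubsets.toList.attach.map fun R => w R.1)
termination_by S.card
decreasing_by
  exact Finset.card_lt_card (Finset.mem_ssubsets.mp (Finset.mem_toList.mp R.2))



-- HC : prefixes of replicate ++ X
theorem prefix_replicate_cases {n : ℕ} {X v : List Bool}
    (h : v <+: replicate n true ++ X) :
    (∃ j ≤ n, v = replicate j true) ∨ replicate n true <+: v := by
  rcases le_or_gt v.length n with hle | hlt
  · left
    refine ⟨v.length, hle, ?_⟩
    obtain ⟨t, ht⟩ := h
    have : v = (replicate n true ++ X).take v.length := by
      rw [← ht, take_append_of_le_length (by simp)]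
      · simp
    rw [this, take_append_of_le_length (by simpa using hle), take_replicate, min_eq_left hle]
    simp
  · right
    exact prefix_of_prefix_length_le ⟨X, rfl⟩ h (by simp; omega)

-- HB : suffixes of mark starting with [false, true]
theorem suffix_mark_eq {n : ℕ} {u₁ : List Bool} (hs : u₁ <:+ mark n)
    (hp : [false, true] <+: u₁) : u₁ = mark n := by
  obtain ⟨p, hpeq⟩ := hs
  cases p with
  | nil => simpa using hpeq
  | cons x p' =>
    exfalso
    obtain ⟨r, rfl⟩ := hp
    simp only [mark, cons_append] at hpeq
    have hx : x = false := (List.cons.injEq _ _ _ _ ▸ hpeq).1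
    have h2 : p' ++ (false :: true :: r) = replicate n true ++ [false] := by
      have := (List.cons.injEq _ _ _ _ ▸ hpeq).2
      simpa using this
    rcases List.append_eq_append_iff.mp h2 with ⟨a', ha1, ha2⟩ | ⟨c', _, hc2⟩
    · cases a' with
      | nil =>
        have := congrArg length ha2
        simp at this
      | cons y ys =>
        have hy : y = true := eq_of_mem_replicate (by rw [ha1]; exact mem_append_right _ (mem_cons_self))
        have : (false : Bool) = y := (List.cons.injEq _ _ _ _ ▸ ha2).1
        rw [hy] at this
        exact Bool.noConfusion this
    · have := congrArg length hc2
      simp at this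
      omega

-- HA : u cannot be infix of mark n
theorem not_infix_mark {n : ℕ} {u : List Bool}
    (hpre : [false, true] <+: u) (hsuf : [true, false] <:+ u) (hNR : NR n u) :
    ¬ u <:+: mark n := by
  rintro ⟨s, t, hst⟩
  have hlen2 : 2 ≤ u.length := hpre.length_le
  cases s with
  | nil =>
    -- u is a prefix of mark n
    have hu : u <+: mark n := ⟨t, by simpa using hst⟩
    rcases le_or_gt u.length (n + 1) with hle | hlt
    · -- u <+: false :: replicate n true
      have hu' : u <+: false :: replicate n true := by
        have : (false :: replicate n true) <+: mark n := ⟨[false], by simp [mark]⟩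
        exact prefix_of_prefix_length_le hu this (by simpa using hle)
      obtain ⟨r, rfl⟩ := hpre
      have : (true :: r) <+: replicate n true := by simpa using hu'
      -- but u ends with false, so false ∈ true :: r
      obtain ⟨q, hq⟩ := hsuf
      have hfmem : (false : Bool) ∈ true :: r := by
        rcases q with _ | ⟨z, q'⟩
        · simp at hq
        · have : q' ++ [true, false] = true :: r := by
            have := (List.cons.injEq _ _ _ _ ▸ hq.symm).2
            simpa using this.symm
          rw [← this]
          exact mem_append_right _ (by simp)
      exact absurd (eq_of_mem_replicate (this.subset hfmem)) (by simp)
    · -- u = mark n, contains the run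
      have hlen : u.length = n + 2 := by
        have := hu.length_le
        simp [mark] at this
        omega
      have : u = mark n := hu.eq_of_length (by simp [mark]; omega)
      exact hNR (by rw [this]; exact ⟨[false], [false], by simp [mark]⟩)
  | cons x s' =>
    obtain ⟨r, rfl⟩ := hpre
    simp only [mark, cons_append, append_assoc] at hst
    have h2 : s' ++ (false :: true :: r ++ t) = replicate n true ++ [false] := by
      have := (List.cons.injEq _ _ _ _ ▸ hst).2
      simpa using this
    rcases List.append_eq_append_iff.mp h2 with ⟨a', ha1, ha2⟩ | ⟨c', _, hc2⟩
    · cases a' with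
      | nil =>
        have := congrArg length ha2
        simp at this
      | cons y ys =>
        have hy : y = true := eq_of_mem_replicate (by rw [ha1]; exact mem_append_right _ (mem_cons_self))
        have : (false : Bool) = y := (List.cons.injEq _ _ _ _ ▸ ha2).1
        rw [hy] at this
        exact Bool.noConfusion this
    · have := congrArg length hc2
      simp at this
      omega



theorem replicate_infix_mark (n : ℕ) : replicate n true <:+: mark n :=
  ⟨[false], [false], by simp [mark]⟩

theorem infix_glue_cases {n : ℕ} (hn : 1 ≤ n) {u : List Bool}
    (hpre : [false, true] <+: u) (hsuf : [true, false] <:+ u) (hNR : NR n u) :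
    ∀ L : List (List Bool),
      (∀ b ∈ L, (∃ b', b = false :: b') ∧ (∃ b'', b = b'' ++ [false])) →
      u <:+: glue n L → ∃ b ∈ L, u <:+: b := by
  intro L
  induction L with
  | nil => intro _ h; exact absurd h (not_infix_mark hpre hsuf hNR)
  | cons b L ih =>
    intro hbl h
    rcases infix_append_cases (a := mark n) h with h1 | h1 | ⟨u₁, u₂, hu, hne1, hne2, hs, hp⟩
    · exact absurd h1 (not_infix_mark hpre hsuf hNR)
    · rcases infix_append_cases (a := b) h1 with h2 | h2 | ⟨u₁, u₂, hu, hne1, hne2, hs, hp⟩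
      · exact ⟨b, mem_cons_self, h2⟩
      · obtain ⟨c, hc, hc2⟩ := ih (fun c hc => hbl c (mem_cons_of_mem _ hc)) h2
        exact ⟨c, mem_cons_of_mem _ hc, hc2⟩
      · -- straddle between b and glue n L
        exfalso
        obtain ⟨t₀, ht₀⟩ := mark_prefix_glue n L
        have hglue : glue n L = false :: (replicate n true ++ ([false] ++ t₀)) := by
          rw [← ht₀]; simp [mark]
        have hu₂u : u₂ <:+ u := by rw [hu]; exact suffix_append u₁ u₂
        cases u₂ with
        | nil => exact hne2 rfl
        | cons y v =>
          have hy : y = false := (cons_prefix_cons.mp (hglue ▸ hp)).1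
          subst hy
          cases v with
          | nil =>
            -- u₂ = [false]
            obtain ⟨q, hq⟩ := hsuf
            have hu1 : u₁ = q ++ [true] := by
              apply append_cancel_right (bs := [false])
              simpa using (hq.trans hu).symm
            obtain ⟨-, b'', hb''⟩ := hbl b (mem_cons_self)
            have hrev := reverse_prefix.mpr hs
            rw [hu1, hb''] at hrev
            simp only [reverse_append, reverse_cons, reverse_nil, nil_append,
              cons_append] at hrev
            exact Bool.noConfusion (cons_prefix_cons.mp hrev).1
          | cons z v' =>
            have hvp : (z :: v') <+: replicate n true ++ ([false] ++ t₀) :=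
              (cons_prefix_cons.mp (hglue ▸ hp)).2
            have hsu₂ : [true, false] <:+ (false :: z :: v') :=
              suffix_of_suffix_length_le hsuf hu₂u (by simp)
            have hsv : [true, false] <:+ (z :: v') := by
              cases v' with
              | nil =>
                have := hsu₂.eq_of_length (by simp)
                simp at this
              | cons z₂ v₂ =>
                exact suffix_of_suffix_length_le hsu₂ ⟨[false], rfl⟩ (by simp)
            rcases prefix_replicate_cases hvp with ⟨j, hj, hrep⟩ | hrep
            · have hfm : (false : Bool) ∈ z :: v' := hsv.subset (by simp)
              rw [hrep] at hfm
              exact Bool.noConfusion (eq_of_mem_replicate hfm)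
            · refine hNR (IsInfix.trans hrep.isInfix (IsInfix.trans ?_ hu₂u.isInfix))
              exact ⟨[false], [], by simp⟩
    · -- straddle between mark n and (b ++ glue n L)
      exfalso
      cases u₁ with
      | nil => exact hne1 rfl
      | cons x v =>
        cases v with
        | nil =>
          obtain ⟨r, hr⟩ := hpre
          rw [← hr] at hu
          simp only [cons_append, nil_append] at hu
          have hx : x = false := (List.cons.injEq _ _ _ _ ▸ hu.symm).1
          have hu₂ : u₂ = true :: r := by
            have h' := (List.cons.injEq _ _ _ _ ▸ hu.symm).2
            simpa using h'
          obtain ⟨⟨b', hb'⟩, -⟩ := hbl b (mem_cons_self)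
          rw [hu₂, hb'] at hp
          simp at hp
        | cons x₂ v₂ =>
          have hpu₁ : (x :: x₂ :: v₂) <+: u := ⟨u₂, hu.symm⟩
          have hpre₁ : [false, true] <+: (x :: x₂ :: v₂) :=
            prefix_of_prefix_length_le hpre hpu₁ (by simp)
          have hmark := suffix_mark_eq hs hpre₁
          exact hNR ((replicate_infix_mark n).trans (hmark ▸ hpu₁.isInfix))



theorem w_eq (S : Finset ℕ) :
    w S = glue (Nv S) (S.ssubsets.toList.attach.map fun R => w R.1) := by
  rw [w]

theorem Nv_pos (S : Finset ℕ) : 1 ≤ Nv S := Nat.succ_le_succ (Nat.zero_le _)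

theorem Nv_lt_of_ssubset {R S : Finset ℕ} (h : R ⊂ S) : Nv R < Nv S :=
  Nat.succ_lt_succ (val_strictMono h)

theorem Nv_inj {R S : Finset ℕ} (h : Nv R = Nv S) : R = S :=
  val_injective (Nat.succ_injective h)

theorem mark_pre {n : ℕ} (hn : 1 ≤ n) : [false, true] <+: mark n := by
  obtain ⟨m, rfl⟩ := Nat.exists_eq_add_of_le hn
  exact ⟨replicate m true ++ [false], by simp [mark, replicate_succ, Nat.add_comm]⟩

theorem mark_suf {n : ℕ} (hn : 1 ≤ n) : [true, false] <:+ mark n := by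
  obtain ⟨m, rfl⟩ := Nat.exists_eq_add_of_le hn
  refine ⟨false :: replicate m true, ?_⟩
  simp [mark, Nat.add_comm 1 m, replicate_succ' (n := m)]

theorem glue_last (n : ℕ) (L : List (List Bool)) : ∃ g, glue n L = g ++ [false] := by
  obtain ⟨p, hp⟩ := mark_suffix_glue n L
  exact ⟨p ++ (false :: replicate n true), by rw [← hp]; simp [mark]⟩

theorem w_head (S : Finset ℕ) : ∃ g, w S = false :: g := by
  rw [w_eq]; exact glue_head _ _

theorem w_last (S : Finset ℕ) : ∃ g, w S = g ++ [false] := by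
  rw [w_eq]; exact glue_last _ _

theorem w_pre (S : Finset ℕ) : [false, true] <+: w S := by
  rw [w_eq]
  exact (mark_pre (Nv_pos S)).trans (mark_prefix_glue _ _)

theorem w_suf (S : Finset ℕ) : [true, false] <:+ w S := by
  rw [w_eq]
  exact (mark_suf (Nv_pos S)).trans (mark_suffix_glue _ _)

theorem replicate_infix_w (S : Finset ℕ) : replicate (Nv S) true <:+: w S := by
  rw [w_eq]
  exact (replicate_infix_mark _).trans (mark_prefix_glue _ _).isInfix

theorem mem_blocks {S : Finset ℕ} {b : List Bool}
    (hb : b ∈ S.ssubsets.toList.attach.map fun R => w R.1) :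
    ∃ R, R ⊂ S ∧ b = w R := by
  obtain ⟨⟨R, hR⟩, -, rfl⟩ := mem_map.mp hb
  exact ⟨R, Finset.mem_ssubsets.mp (Finset.mem_toList.mp hR), rfl⟩

theorem w_mem_blocks {R S : Finset ℕ} (h : R ⊂ S) :
    w R ∈ S.ssubsets.toList.attach.map fun R => w R.1 :=
  mem_map.mpr ⟨⟨R, Finset.mem_toList.mpr (Finset.mem_ssubsets.mpr h)⟩, mem_attach _ _, rfl⟩

theorem NR_w (S : Finset ℕ) : NR (Nv S + 1) (w S) := by
  induction S using Finset.strongInduction with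
  | _ S ih =>
    rw [w_eq]
    refine NR_glue ?_
    intro b hb
    obtain ⟨R, hRS, rfl⟩ := mem_blocks hb
    exact ⟨(ih R hRS).mono_k (Nat.succ_le_succ (Nv_lt_of_ssubset hRS).le), w_head R⟩

theorem w_infix_of_subset {R S : Finset ℕ} (h : R ⊆ S) : w R <:+: w S := by
  rcases h.ssubset_or_eq with hss | rfl
  · rw [w_eq S]
    exact infix_glue_of_mem (w_mem_blocks hss)
  · exact infix_rfl

theorem subset_of_w_infix : ∀ S R : Finset ℕ, w R <:+: w S → R ⊆ S := by
  intro S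
  induction S using Finset.strongInduction with
  | _ S ih =>
    intro R h
    have hrun : replicate (Nv R) true <:+: w S := (replicate_infix_w R).trans h
    have hle : Nv R ≤ Nv S := by
      by_contra hlt
      exact (NR_w S).mono_k (by omega) hrun
    rcases eq_or_lt_of_le hle with heq | hlt
    · exact (Nv_inj heq).le
    · have hNR : NR (Nv S) (w R) := (NR_w R).mono_k (by omega)
      rw [w_eq S] at h
      obtain ⟨b, hb, hinf⟩ := infix_glue_cases (Nv_pos S) (w_pre R) (w_suf R) hNR _
        (fun b hb => by
          obtain ⟨R', _, rfl⟩ := mem_blocks hb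
          exact ⟨w_head R', w_last R'⟩) h
      obtain ⟨R', hR'S, rfl⟩ := mem_blocks hb
      exact (ih R' hR'S R hinf).trans hR'S.subset

theorem w_infix_iff {R S : Finset ℕ} : w R <:+: w S ↔ R ⊆ S :=
  ⟨subset_of_w_infix S R, w_infix_of_subset⟩

theorem infix_map_iff {α β : Type*} {g : α → β} (hg : Function.Injective g)
    {u v : List α} : List.map g u <:+: List.map g v ↔ u <:+: v := by
  constructor
  · rintro ⟨s, t, hst⟩
    have hu : u = (v.drop s.length).take u.length := by
      apply map_injective_iff.mpr hg
      rw [map_take, map_drop, ← hst, append_assoc, drop_left,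
        take_left' (by simp)]
    rw [hu]
    exact ((take_prefix _ _).isInfix).trans ((drop_suffix _ _).isInfix)
  · exact fun h => h.map g

theorem infixes_finite {α : Type*} (v : List α) : {l : List α | l <:+: v}.Finite := by
  classical
  refine Set.Finite.subset (Finset.finite_toSet (v.tails.flatMap List.inits).toFinset) ?_
  intro l hl
  obtain ⟨t, hlt, htv⟩ := infix_iff_prefix_suffix.mp hl
  simp only [Finset.coe_sort_coe, Finset.mem_coe, List.mem_toFinset, List.mem_flatMap]
  exact ⟨t, (mem_tails _ _).mpr htv, (mem_inits _ _).mpr hlt⟩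

end KuskeProof

/-- **Kuske.** For a partially ordered set `X` and a finite alphabet `A`
with at least two letters, `X` order-embeds into `(A*, infix)` iff `X` is countable
and every element has a finite downward closure. -/
theorem embeds_into_infix_iff_countable_finite_downsets
    {X : Type*} [PartialOrder X] {A : Type*} [Fintype A]
    (hA : 2 ≤ Fintype.card A) :
    (∃ f : X → List A, ∀ x y : X, x ≤ y ↔ f x <:+: f y)
    ↔
    (Countable X ∧ ∀ x : X, {y : X | y ≤ x}.Finite) := by
  constructor
  · rintro ⟨f, hf⟩
    have hinj : Function.Injective f := by
      intro x y hxy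
      exact le_antisymm ((hf x y).mpr (hxy ▸ List.infix_rfl))
        ((hf y x).mpr (hxy ▸ List.infix_rfl))
    refine ⟨hinj.countable, fun x => ?_⟩
    refine Set.Finite.of_finite_image ?_ (hinj.injOn)
    refine Set.Finite.subset (KuskeProof.infixes_finite (f x)) ?_
    rintro - ⟨y, hy, rfl⟩
    exact (hf y x).mp hy
  · rintro ⟨hcount, hfin⟩
    obtain ⟨g, hg⟩ := exists_injective_nat X
    obtain ⟨a, b, hab⟩ := Fintype.exists_pair_of_one_lt_card (α := A) (by omega)
    set g2 : Bool → A := fun t => if t then a else b with hg2def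
    have hg2 : Function.Injective g2 := by
      rw [Bool.injective_iff]
      simpa [hg2def] using hab.symm
    set F : X → Finset ℕ := fun x => (hfin x).toFinset.image g with hFdef
    have hF : ∀ x y : X, x ≤ y ↔ F x ⊆ F y := by
      intro x y
      constructor
      · intro hxy
        apply Finset.image_subset_image
        rw [Set.Finite.toFinset_subset_toFinset]
        exact fun z hz => le_trans hz hxy
      · intro hsub
        have hx : g x ∈ F x := by
          simp only [hFdef, Finset.mem_image]
          exact ⟨x, (hfin x).mem_toFinset.mpr (le_refl x), rfl⟩
        obtain ⟨z, hz, hzx⟩ := Finset.mem_image.mp (hsub hx)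
        rw [← hg hzx]
        exact (hfin y).mem_toFinset.mp hz
    refine ⟨fun x => (KuskeProof.w (F x)).map g2, fun x y => ?_⟩
    rw [hF x y, ← KuskeProof.w_infix_iff, ← KuskeProof.infix_map_iff hg2]
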